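/- Suppose every job j ∈ J satisfies d_j ≤ c_min/2. Then J can be partitioned into at most 8r feasible rounds, where r is the congestion of the instance. -/

import Mathlib

open scoped Classical

namespace PathUFP

variable {ι : Type*}

/-- Job `i` uses the edge `e_{k+1}` (for `k : Fin m`, edges being 1-indexed
`e_1, …, e_m`) iff `s_i < k + 1 ≤ t_i`, i.e. iff `s_i ≤ k < t_i`. -/
def uses (s t : ι → ℕ) {m : ℕ} (i : ι) (k : Fin m) : Prop :=
  s i ≤ (k : ℕ) ∧ (k : ℕ) < t i

/-- The load of edge `e_{k+1}`: total demand of the jobs using it. -/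
noncomputable def load [Fintype ι] (s t : ι → ℕ) (d : ι → ℝ) {m : ℕ} (k : Fin m) : ℝ :=
  ∑ i : ι, if uses s t i k then d i else 0

/-- The congestion `r = max_k ⌈l_k / c_k⌉` of the instance. -/
noncomputable def congestion [Fintype ι] (s t : ι → ℕ) (d : ι → ℝ) {m : ℕ}
    (hm : 0 < m) (c : Fin m → ℝ) : ℤ :=
  Finset.univ.sup' ⟨⟨0, hm⟩, Finset.mem_univ _⟩ fun k => ⌈load s t d k / c k⌉

/-- The minimum edge capacity. -/
noncomputable def cmin {m : ℕ} (hm : 0 < m) (c : Fin m → ℝ) : ℝ :=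
  Finset.univ.inf' ⟨⟨0, hm⟩, Finset.mem_univ _⟩ c

/-- `f` is a Round-UFP packing of the jobs into `K` feasible rounds: on each round and
each edge, the total demand of the jobs of that round using that edge is at most the
capacity of the edge. -/
def IsPacking [Fintype ι] (s t : ι → ℕ) (d : ι → ℝ) {m : ℕ} (c : Fin m → ℝ)
    {K : ℕ} (f : ι → Fin K) : Prop :=
  ∀ (r : Fin K) (k : Fin m),
    (∑ i : ι, if f i = r ∧ uses s t i k then d i else 0) ≤ c k

end PathUFP

namespace RoundUFPAux

open PathUFP

/-- Sums over finite unions are at most the sums of the sums, for nonnegative weights. -/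
lemma sum_biUnion_le {α β : Type*} (E : Finset α) (g : α → Finset β) (f : β → ℝ)
    (hf : ∀ b, 0 ≤ f b) :
    ∑ b ∈ E.biUnion g, f b ≤ ∑ x ∈ E, ∑ b ∈ g x, f b := by
  induction E using Finset.induction_on with
  | empty => simp
  | @insert a E ha ih =>
    rw [Finset.biUnion_insert, Finset.sum_insert ha]
    have h1 : ∑ b ∈ g a ∪ E.biUnion g, f b ≤ (∑ b ∈ g a, f b) + ∑ b ∈ E.biUnion g, f b := by
      have := Finset.sum_union_inter (s₁ := g a) (s₂ := E.biUnion g) (f := f)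
      have h0 : 0 ≤ ∑ b ∈ g a ∩ E.biUnion g, f b := Finset.sum_nonneg fun b _ => hf b
      linarith
    exact h1.trans (by linarith [ih])

variable {ι : Type*} [Fintype ι] {m : ℕ} (c : Fin m → ℝ) (s t : ι → ℕ) (d : ι → ℝ)

noncomputable def spanF (i : ι) : Finset (Fin m) :=
  Finset.univ.filter fun k => uses s t i k

/-- The bottleneck capacity of job `i`. -/
noncomputable def btl (i : ι) : ℝ :=
  if h : (spanF s t i).Nonempty then (spanF s t i).inf' h c else 0

noncomputable def idx (i : ι) : ℕ := (Fintype.equivFin ι i : ℕ)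

/-- The processing order: by bottleneck capacity, then by left endpoint, then by an
arbitrary tiebreaker. -/
def ltJ (i' i : ι) : Prop :=
  btl c s t i' < btl c s t i ∨
    (btl c s t i' = btl c s t i ∧ (s i' < s i ∨ (s i' = s i ∧ idx i' < idx i)))

lemma ltJ_irrefl (i : ι) : ¬ ltJ c s t i i := by
  rintro (h | ⟨-, h | ⟨-, h⟩⟩) <;> exact lt_irrefl _ h

lemma ltJ_trans {a b e : ι} (h1 : ltJ c s t a b) (h2 : ltJ c s t b e) : ltJ c s t a e := by
  rcases h1 with h1 | ⟨e1, h1⟩ <;> rcases h2 with h2 | ⟨e2, h2⟩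
  · exact Or.inl (h1.trans h2)
  · exact Or.inl (e2 ▸ h1)
  · exact Or.inl (e1 ▸ h2)
  · refine Or.inr ⟨e1.trans e2, ?_⟩
    rcases h1 with h1 | ⟨f1, h1⟩ <;> rcases h2 with h2 | ⟨f2, h2⟩
    · exact Or.inl (h1.trans h2)
    · exact Or.inl (f2 ▸ h1)
    · exact Or.inl (f1 ▸ h2)
    · exact Or.inr ⟨f1.trans f2, h1.trans h2⟩

lemma ltJ_total {a b : ι} (h : a ≠ b) : ltJ c s t a b ∨ ltJ c s t b a := by
  rcases lt_trichotomy (btl c s t a) (btl c s t b) with hb | hb | hb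
  · exact Or.inl (Or.inl hb)
  · rcases lt_trichotomy (s a) (s b) with hs | hs | hs
    · exact Or.inl (Or.inr ⟨hb, Or.inl hs⟩)
    · rcases lt_trichotomy (idx a) (idx b) with hi | hi | hi
      · exact Or.inl (Or.inr ⟨hb, Or.inr ⟨hs, hi⟩⟩)
      · exact absurd (Fin.val_injective.comp (Fintype.equivFin ι).injective hi) h
      · exact Or.inr (Or.inr ⟨hb.symm, Or.inr ⟨hs.symm, hi⟩⟩)
    · exact Or.inr (Or.inr ⟨hb.symm, Or.inl hs⟩)
  · exact Or.inr (Or.inl hb)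

/-- The set of jobs processed before `i`. -/
noncomputable def pred (i : ι) : Finset ι := Finset.univ.filter fun i' => ltJ c s t i' i

noncomputable def rk (i : ι) : ℕ := (pred c s t i).card

lemma rk_lt {i' i : ι} (h : ltJ c s t i' i) : rk c s t i' < rk c s t i := by
  apply Finset.card_lt_card
  constructor
  · intro x hx
    simp only [pred, Finset.mem_filter, Finset.mem_univ, true_and] at hx ⊢
    exact ltJ_trans c s t hx h
  · intro hsub
    have hmem : i' ∈ pred c s t i := by
      simp only [pred, Finset.mem_filter, Finset.mem_univ, true_and]; exact h
    have := hsub hmem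
    simp only [pred, Finset.mem_filter, Finset.mem_univ, true_and] at this
    exact ltJ_irrefl c s t i' this

/-- First-fit greedy: the round of job `i` is the least round in which it fits, given
the assignment of the previously processed jobs. -/
noncomputable def greedy : ι → ℕ := fun i =>
  sInf {ρ : ℕ | ∀ k, uses s t i k →
      (∑ x ∈ (pred c s t i).attach,
        if greedy x.1 = ρ ∧ uses s t x.1 k then d x.1 else 0) + d i ≤ c k}
termination_by i => rk c s t i
decreasing_by
  all_goals
    { have hx := x.2
      simp only [pred, Finset.mem_filter, Finset.mem_univ, true_and] at hx
      exact rk_lt c s t hx }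

/-- `i` fits in round `ρ` (given the previously processed jobs). -/
def Good (i : ι) (ρ : ℕ) : Prop := ∀ k, uses s t i k →
  (∑ x ∈ (pred c s t i).attach,
    if greedy c s t d x.1 = ρ ∧ uses s t x.1 k then d x.1 else 0) + d i ≤ c k

lemma good_exists (hc : ∀ k, 0 < c k) (hsm : ∀ i (k : Fin m), d i ≤ c k / 2) (i : ι) :
    ∃ ρ, Good c s t d i ρ := by
  refine ⟨((pred c s t i).attach.sup fun x => greedy c s t d x.1) + 1, ?_⟩
  intro k hk
  have hz : (∑ x ∈ (pred c s t i).attach,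
      if greedy c s t d x.1 = ((pred c s t i).attach.sup fun x => greedy c s t d x.1) + 1
        ∧ uses s t x.1 k then d x.1 else 0) = 0 := by
    refine Finset.sum_eq_zero fun x hx => ?_
    rw [if_neg]
    rintro ⟨h1, -⟩
    have h2 : greedy c s t d x.1 ≤ (pred c s t i).attach.sup fun y => greedy c s t d y.1 :=
      Finset.le_sup (f := fun y => greedy c s t d y.1) hx
    omega
  rw [hz]
  have := hsm i k
  have := hc k
  linarith

lemma greedy_eq (i : ι) : greedy c s t d i = sInf {ρ : ℕ | Good c s t d i ρ} := by
  rw [greedy]; rfl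

lemma greedy_spec (hc : ∀ k, 0 < c k) (hsm : ∀ i (k : Fin m), d i ≤ c k / 2) (i : ι) :
    Good c s t d i (greedy c s t d i) := by
  rw [greedy_eq]
  exact Nat.sInf_mem (good_exists c s t d hc hsm i)

lemma greedy_min (i : ι) {ρ : ℕ} (h : ρ < greedy c s t d i) : ¬ Good c s t d i ρ := by
  rw [greedy_eq] at h
  exact Nat.notMem_of_lt_sInf h

end RoundUFPAux

open PathUFP RoundUFPAux in
/-- Suppose every job `j ∈ J` satisfies `d_j ≤ c_min / 2`. Then `J` can
be partitioned into at most `8r` feasible rounds, where `r` is the congestion of the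
instance. -/
theorem packing_of_small_jobs {ι : Type*} [Fintype ι] {m : ℕ} (hm : 0 < m)
    (c : Fin m → ℝ) (hc : ∀ k, 0 < c k)
    (s t : ι → ℕ) (d : ι → ℝ)
    (hst : ∀ i, s i < t i) (htm : ∀ i, t i ≤ m) (hd : ∀ i, 0 < d i)
    (hsmall : ∀ i, d i ≤ cmin hm c / 2) :
    ∃ (K : ℕ) (f : ι → Fin K),
      (K : ℤ) ≤ 8 * congestion s t d hm c ∧ IsPacking s t d c f := by
  classical
  set r := congestion s t d hm c with hrdef
  have hcmin_le : ∀ k : Fin m, cmin hm c ≤ c k := fun k => Finset.inf'_le _ (Finset.mem_univ k)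
  have hcmin_pos : 0 < cmin hm c := by
    obtain ⟨k0, -, hk0⟩ := Finset.exists_mem_eq_inf' (⟨⟨0, hm⟩, Finset.mem_univ _⟩ :
      (Finset.univ : Finset (Fin m)).Nonempty) c
    rw [cmin, hk0]; exact hc k0
  have hload_nonneg : ∀ k : Fin m, 0 ≤ load s t d k := by
    intro k
    refine Finset.sum_nonneg fun i _ => ?_
    show (0:ℝ) ≤ if uses s t i k then d i else 0
    split
    · exact (hd i).le
    · exact le_refl 0
  have hload_le : ∀ k : Fin m, load s t d k ≤ (r : ℝ) * c k := by
    intro k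
    have h1 : ⌈load s t d k / c k⌉ ≤ r :=
      Finset.le_sup' (fun k : Fin m => ⌈load s t d k / c k⌉) (Finset.mem_univ k)
    have h2 : load s t d k / c k ≤ (r : ℝ) := (Int.le_ceil _).trans (by exact_mod_cast h1)
    rw [div_le_iff₀ (hc k)] at h2
    linarith
  have hr0 : 0 ≤ r := by
    have h0 : (0:ℤ) ≤ ⌈load s t d ⟨0, hm⟩ / c ⟨0, hm⟩⌉ :=
      Int.ceil_nonneg (div_nonneg (hload_nonneg _) (hc _).le)
    exact h0.trans (Finset.le_sup' (fun k : Fin m => ⌈load s t d k / c k⌉)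
      (Finset.mem_univ _))
  have hsm : ∀ i (k : Fin m), d i ≤ c k / 2 := fun i k =>
    (hsmall i).trans (by have := hcmin_le k; linarith)
  rcases isEmpty_or_nonempty ι with hempty | hne
  · refine ⟨0, fun i => (IsEmpty.false i).elim, ?_, ?_⟩
    · simpa using mul_nonneg (by norm_num : (0:ℤ) ≤ 8) hr0
    · intro ρ
      exact ρ.elim0
  · obtain ⟨i0⟩ := hne
    have hr1 : 1 ≤ r := by
      have hk0 : s i0 < m := lt_of_lt_of_le (hst i0) (htm i0)
      set k0 : Fin m := ⟨s i0, hk0⟩ with hk0def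
      have huse : uses s t i0 k0 := ⟨le_refl _, hst i0⟩
      have hld : d i0 ≤ load s t d k0 := by
        have h1 : (if uses s t i0 k0 then d i0 else 0)
            ≤ ∑ x : ι, (if uses s t x k0 then d x else 0) :=
          Finset.single_le_sum (f := fun i => if uses s t i k0 then d i else 0)
            (fun i _ => by
              show (0:ℝ) ≤ if uses s t i k0 then d i else 0
              split
              · exact (hd i).le
              · exact le_refl 0) (Finset.mem_univ i0)
        rw [if_pos huse] at h1
        simpa [load] using h1
      have hpos : 0 < load s t d k0 / c k0 := div_pos (lt_of_lt_of_le (hd i0) hld) (hc k0)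
      have h1 : (1:ℤ) ≤ ⌈load s t d k0 / c k0⌉ := Int.ceil_pos.mpr hpos
      exact h1.trans (Finset.le_sup' (fun k : Fin m => ⌈load s t d k / c k⌉)
        (Finset.mem_univ _))
    set gr := greedy c s t d with hgrdef
    have hgrK : ∀ i, gr i < Finset.univ.sup fun i : ι => gr i + 1 := fun i =>
      Nat.lt_of_lt_of_le (Nat.lt_succ_self _)
        (Finset.le_sup (f := fun i : ι => gr i + 1) (Finset.mem_univ i))
    refine ⟨Finset.univ.sup fun i : ι => gr i + 1, fun i => ⟨gr i, hgrK i⟩, ?_, ?_⟩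
    · -- the bound on the number of rounds
      obtain ⟨j, -, hjmax⟩ := Finset.exists_max_image Finset.univ gr ⟨i0, Finset.mem_univ i0⟩
      have hKκ : (Finset.univ.sup fun i : ι => gr i + 1) ≤ gr j + 1 :=
        Finset.sup_le fun i _ => Nat.succ_le_succ (hjmax i (Finset.mem_univ i))
      have hgoal : (gr j : ℤ) + 1 ≤ 8 * r := by
        rcases Nat.eq_zero_or_pos (gr j) with h0 | hκpos
        · rw [h0]; push_cast; linarith
        · -- the main counting argument
          have hspan : ∀ i : ι, (spanF s t i : Finset (Fin m)).Nonempty := fun i =>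
            ⟨⟨s i, lt_of_lt_of_le (hst i) (htm i)⟩, by
              simp only [spanF, Finset.mem_filter, Finset.mem_univ, true_and]
              exact ⟨le_refl _, hst i⟩⟩
          have hbtl_le : ∀ i (k : Fin m), uses s t i k → btl c s t i ≤ c k := by
            intro i k hk
            rw [btl, dif_pos (hspan i)]
            exact Finset.inf'_le _ (by
              simp only [spanF, Finset.mem_filter, Finset.mem_univ, true_and]
              exact hk)
          have hbtl : ∀ i : ι, ∃ qq : Fin m, uses s t i qq ∧ c qq = btl c s t i := by
            intro i
            obtain ⟨qq, hq, hq2⟩ := Finset.exists_mem_eq_inf' (hspan i) c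
            refine ⟨qq, ?_, ?_⟩
            · simpa only [spanF, Finset.mem_filter, Finset.mem_univ, true_and] using hq
            · rw [btl, dif_pos (hspan i)]
              exact hq2.symm
          choose q hq1 hq2 using hbtl
          set b := btl c s t j with hbdef
          have hcminb : cmin hm c ≤ b := by rw [hbdef, ← hq2 j]; exact hcmin_le _
          have hbpos : 0 < b := lt_of_lt_of_le hcmin_pos hcminb
          set W := Finset.univ.filter (fun k : Fin m => s j ≤ (k:ℕ) ∧ c k ≤ b) with hWdef
          have hWne : W.Nonempty := ⟨q j, by
            simp only [hWdef, Finset.mem_filter, Finset.mem_univ, true_and]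
            exact ⟨(hq1 j).1, le_of_eq (hq2 j)⟩⟩
          set w := W.min' hWne with hwdef
          have hwW : s j ≤ (w:ℕ) ∧ c w ≤ b := by
            have := W.min'_mem hWne
            simpa only [hWdef, Finset.mem_filter, Finset.mem_univ, true_and] using this
          set U := Finset.univ.filter (fun k : Fin m => (k:ℕ) < s j ∧ c k ≤ b) with hUdef
          set V := Finset.univ.filter (fun k : Fin m => t j ≤ (k:ℕ) ∧ c k ≤ b) with hVdef
          set u := if hU : U.Nonempty then U.max' hU else w with hudef
          set v := if hV : V.Nonempty then V.min' hV else w with hvdef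
          set E : Finset (Fin m) := insert u (insert w {v}) with hEdef
          have hulow : c u ≤ b := by
            rw [hudef]
            split
            · rename_i hU
              have := U.max'_mem hU
              simp only [hUdef, Finset.mem_filter, Finset.mem_univ, true_and] at this
              exact this.2
            · exact hwW.2
          have hvlow : c v ≤ b := by
            rw [hvdef]
            split
            · rename_i hV
              have := V.min'_mem hV
              simp only [hVdef, Finset.mem_filter, Finset.mem_univ, true_and] at this
              exact this.2
            · exact hwW.2
          have hElow : ∀ x ∈ E, c x ≤ b := by
            intro x hx
            rw [hEdef] at hx
            rcases Finset.mem_insert.mp hx with h | hx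
            · rw [h]; exact hulow
            rcases Finset.mem_insert.mp hx with h | hx
            · rw [h]; exact hwW.2
            · rw [Finset.mem_singleton.mp hx]; exact hvlow
          have hEcard : (E.card : ℝ) ≤ 3 := by
            have h1 : E.card ≤ 3 := by
              rw [hEdef]
              refine (Finset.card_insert_le _ _).trans ?_
              have h2 : (insert w {v} : Finset (Fin m)).card ≤ 2 :=
                (Finset.card_insert_le _ _).trans (by simp)
              omega
            exact_mod_cast h1
          -- the covering claim
          have cover : ∀ i', ltJ c s t i' j → ∀ k : Fin m, uses s t i' k → uses s t j k →
              ∃ x ∈ E, uses s t i' x := by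
            intro i' hlt k hik hjk
            have hble : btl c s t i' ≤ b := by
              rcases hlt with h | ⟨h, -⟩
              · exact h.le
              · exact h.le
            rcases lt_or_ge ((q i' : Fin m) : ℕ) (s j) with hq | hq
            · -- bottleneck of i' lies strictly left of the span of j
              have hUne : U.Nonempty := ⟨q i', by
                simp only [hUdef, Finset.mem_filter, Finset.mem_univ, true_and]
                exact ⟨hq, le_trans (le_of_eq (hq2 i')) hble⟩⟩
              have huu : u = U.max' hUne := by rw [hudef, dif_pos hUne]
              have hqu : ((q i' : Fin m) : ℕ) ≤ (u : ℕ) := by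
                rw [huu]
                exact U.le_max' _ (by
                  simp only [hUdef, Finset.mem_filter, Finset.mem_univ, true_and]
                  exact ⟨hq, le_trans (le_of_eq (hq2 i')) hble⟩)
              have huU : (u:ℕ) < s j ∧ c u ≤ b := by
                have := U.max'_mem hUne
                rw [← huu] at this
                simpa only [hUdef, Finset.mem_filter, Finset.mem_univ, true_and] using this
              have huE : u ∈ E := by rw [hEdef]; exact Finset.mem_insert_self _ _
              refine ⟨u, huE, ?_, ?_⟩
              · exact le_trans (hq1 i').1 hqu
              · exact lt_of_lt_of_le (lt_of_lt_of_le huU.1 hjk.1) (le_of_lt hik.2)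
            · rcases lt_or_ge ((q i' : Fin m) : ℕ) (t j) with hq' | hq'
              · -- bottleneck of i' lies inside the span of j
                have hjq : uses s t j (q i') := ⟨hq, hq'⟩
                have hbeq : btl c s t i' = b :=
                  le_antisymm hble (by rw [← hq2 i']; exact hbtl_le j _ hjq)
                have hsle : s i' ≤ s j := by
                  rcases hlt with h | ⟨-, h | ⟨h, -⟩⟩
                  · exact absurd hbeq (ne_of_lt h)
                  · exact h.le
                  · exact h.le
                have hqW : q i' ∈ W := by
                  simp only [hWdef, Finset.mem_filter, Finset.mem_univ, true_and]
                  exact ⟨hq, le_trans (le_of_eq (hq2 i')) hbeq.le⟩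
                have hwq : (w:ℕ) ≤ ((q i' : Fin m) : ℕ) := W.min'_le _ hqW
                have hwE : w ∈ E := by
                  rw [hEdef]; exact Finset.mem_insert_of_mem (Finset.mem_insert_self _ _)
                refine ⟨w, hwE, ?_, ?_⟩
                · exact le_trans hsle hwW.1
                · exact lt_of_le_of_lt hwq (hq1 i').2
              · -- bottleneck of i' lies right of the span of j
                have hVne : V.Nonempty := ⟨q i', by
                  simp only [hVdef, Finset.mem_filter, Finset.mem_univ, true_and]
                  exact ⟨hq', le_trans (le_of_eq (hq2 i')) hble⟩⟩
                have hvv : v = V.min' hVne := by rw [hvdef, dif_pos hVne]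
                have hqv : (v : ℕ) ≤ ((q i' : Fin m) : ℕ) := by
                  rw [hvv]
                  exact V.min'_le _ (by
                    simp only [hVdef, Finset.mem_filter, Finset.mem_univ, true_and]
                    exact ⟨hq', le_trans (le_of_eq (hq2 i')) hble⟩)
                have hvV : t j ≤ (v:ℕ) ∧ c v ≤ b := by
                  have := V.min'_mem hVne
                  rw [← hvv] at this
                  simpa only [hVdef, Finset.mem_filter, Finset.mem_univ, true_and] using this
                have hvE : v ∈ E := by
                  rw [hEdef]
                  exact Finset.mem_insert_of_mem
                    (Finset.mem_insert_of_mem (Finset.mem_singleton_self _))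
                refine ⟨v, hvE, ?_, ?_⟩
                · exact le_trans hik.1 (le_trans (le_of_lt hjk.2) hvV.1)
                · exact lt_of_le_of_lt hqv (hq1 i').2
          -- each earlier round carries large load on one of the edges of E
          have main : ∀ ρ ∈ Finset.range (gr j),
              b - cmin hm c / 2 <
                ∑ x ∈ E, ∑ i' : ι, (if gr i' = ρ ∧ uses s t i' x then d i' else 0) := by
            intro ρ hρ
            have hρκ : ρ < greedy c s t d j := Finset.mem_range.mp hρ
            have hng := greedy_min c s t d j hρκ
            simp only [Good] at hng
            push_neg at hng
            obtain ⟨k, hjk, hgt⟩ := hng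
            have hPS : (∑ x ∈ (pred c s t j).attach,
                if greedy c s t d x.1 = ρ ∧ uses s t x.1 k then d x.1 else 0)
                = ∑ i' ∈ (pred c s t j).filter
                    (fun i' => gr i' = ρ ∧ uses s t i' k), d i' := by
              rw [Finset.sum_attach (pred c s t j)
                (fun y => if greedy c s t d y = ρ ∧ uses s t y k then d y else 0)]
              rw [Finset.sum_filter]
            rw [hPS] at hgt
            have hsub : (pred c s t j).filter (fun i' => gr i' = ρ ∧ uses s t i' k) ⊆
                E.biUnion (fun x => Finset.univ.filter
                  fun i' => gr i' = ρ ∧ uses s t i' x) := by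
              intro i' hi'
              simp only [pred, Finset.mem_filter, Finset.mem_univ, true_and] at hi'
              obtain ⟨hlt', hgr', husek⟩ := hi'
              obtain ⟨x, hxE, hxuse⟩ := cover i' hlt' k husek hjk
              exact Finset.mem_biUnion.mpr ⟨x, hxE, by
                simp only [Finset.mem_filter, Finset.mem_univ, true_and]
                exact ⟨hgr', hxuse⟩⟩
            have h1 : (∑ i' ∈ (pred c s t j).filter
                  (fun i' => gr i' = ρ ∧ uses s t i' k), d i')
                ≤ ∑ x ∈ E, ∑ i' ∈ Finset.univ.filter
                    (fun i' => gr i' = ρ ∧ uses s t i' x), d i' :=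
              (Finset.sum_le_sum_of_subset_of_nonneg hsub fun i _ _ => (hd i).le).trans
                (sum_biUnion_le E _ d fun i => (hd i).le)
            have h2 : (∑ x ∈ E, ∑ i' ∈ Finset.univ.filter
                  (fun i' => gr i' = ρ ∧ uses s t i' x), d i')
                = ∑ x ∈ E, ∑ i' : ι, (if gr i' = ρ ∧ uses s t i' x then d i' else 0) :=
              Finset.sum_congr rfl fun x _ => Finset.sum_filter _ _
            have hck : b ≤ c k := hbtl_le j k hjk
            have hdj : d j ≤ cmin hm c / 2 := hsmall j
            rw [h2] at h1
            linarith
          -- summing over the rounds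
          have hκne : (Finset.range (gr j)).Nonempty := ⟨0, Finset.mem_range.mpr hκpos⟩
          have hsum1 : ((gr j : ℝ)) * (b - cmin hm c / 2) <
              ∑ ρ ∈ Finset.range (gr j), ∑ x ∈ E,
                ∑ i' : ι, (if gr i' = ρ ∧ uses s t i' x then d i' else 0) := by
            have h := Finset.sum_lt_sum_of_nonempty hκne main
            rw [Finset.sum_const, Finset.card_range, nsmul_eq_mul] at h
            exact h
          have hinner : ∀ x : Fin m,
              (∑ ρ ∈ Finset.range (gr j),
                ∑ i' : ι, (if gr i' = ρ ∧ uses s t i' x then d i' else 0))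
              ≤ load s t d x := by
            intro x
            rw [Finset.sum_comm]
            refine Finset.sum_le_sum fun i _ => ?_
            have hrw : ∀ ρ, (if gr i = ρ ∧ uses s t i x then d i else 0)
                = if ρ = gr i then (if uses s t i x then d i else 0) else 0 := by
              intro ρ
              by_cases h1 : ρ = gr i <;> by_cases h2 : uses s t i x <;>
                simp [h1, h2]
              · intro h3
                exact absurd h3.symm h1
            simp_rw [hrw]
            rw [Finset.sum_ite_eq' (Finset.range (gr j)) (gr i)
              (fun _ => if uses s t i x then d i else 0)]
            split
            · exact le_refl _
            · split
              · exact (hd i).le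
              · exact le_refl 0
          have hsum2 : (∑ ρ ∈ Finset.range (gr j), ∑ x ∈ E,
                ∑ i' : ι, (if gr i' = ρ ∧ uses s t i' x then d i' else 0))
              ≤ 3 * ((r:ℝ) * b) := by
            rw [Finset.sum_comm]
            have hEload : ∀ x ∈ E, (∑ ρ ∈ Finset.range (gr j),
                ∑ i' : ι, (if gr i' = ρ ∧ uses s t i' x then d i' else 0)) ≤ (r:ℝ) * b := by
              intro x hx
              refine (hinner x).trans ((hload_le x).trans ?_)
              have hrr : (0:ℝ) ≤ (r:ℝ) := by exact_mod_cast hr0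
              exact mul_le_mul_of_nonneg_left (hElow x hx) hrr
            calc (∑ x ∈ E, ∑ ρ ∈ Finset.range (gr j),
                ∑ i' : ι, (if gr i' = ρ ∧ uses s t i' x then d i' else 0))
                ≤ ∑ _x ∈ E, (r:ℝ) * b := Finset.sum_le_sum hEload
              _ = (E.card : ℝ) * ((r:ℝ) * b) := by rw [Finset.sum_const, nsmul_eq_mul]
              _ ≤ 3 * ((r:ℝ) * b) := by
                  have hrb : (0:ℝ) ≤ (r:ℝ) * b :=
                    mul_nonneg (by exact_mod_cast hr0) hbpos.le
                  exact mul_le_mul_of_nonneg_right hEcard hrb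
          have hfinal : ((gr j : ℝ)) * (b - cmin hm c / 2) < 3 * ((r:ℝ) * b) :=
            lt_of_lt_of_le hsum1 hsum2
          have h6 : ((gr j : ℝ)) < 6 * (r:ℝ) := by
            have hκnn : (0:ℝ) ≤ (gr j : ℝ) := Nat.cast_nonneg _
            nlinarith [mul_nonneg hκnn (sub_nonneg.mpr hcminb)]
          have h6' : (gr j : ℤ) < 6 * r := by exact_mod_cast h6
          omega
      calc ((Finset.univ.sup fun i : ι => gr i + 1 : ℕ) : ℤ) ≤ (gr j : ℤ) + 1 := by
            exact_mod_cast hKκ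
        _ ≤ 8 * r := hgoal
    · -- the packing is feasible
      intro ρ k
      have hsum : (∑ i : ι, if (⟨gr i, hgrK i⟩ : Fin (Finset.univ.sup fun i : ι => gr i + 1))
            = ρ ∧ uses s t i k then d i else 0)
          = ∑ i ∈ Finset.univ.filter (fun i => gr i = (ρ:ℕ) ∧ uses s t i k), d i := by
        rw [Finset.sum_filter]
        refine Finset.sum_congr rfl fun i _ => ?_
        refine if_congr (and_congr_left' ?_) rfl rfl
        exact ⟨fun h => by rw [← h], fun h => Fin.ext h⟩
      rw [hsum]
      rcases Finset.eq_empty_or_nonempty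
        (Finset.univ.filter (fun i => gr i = (ρ:ℕ) ∧ uses s t i k)) with hT | hT
      · rw [hT, Finset.sum_empty]
        exact (hc k).le
      · obtain ⟨imax, hiT, hmax⟩ := Finset.exists_max_image _ (fun i => rk c s t i) hT
        have hiT' : gr imax = (ρ:ℕ) ∧ uses s t imax k := by
          simpa only [Finset.mem_filter, Finset.mem_univ, true_and] using hiT
        have key := greedy_spec c s t d hc hsm imax k hiT'.2
        rw [show greedy c s t d imax = (ρ:ℕ) from hiT'.1] at key
        rw [Finset.sum_attach (pred c s t imax)
          (fun y => if greedy c s t d y = (ρ:ℕ) ∧ uses s t y k then d y else 0)] at key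
        rw [← Finset.sum_filter] at key
        have hsubset : (Finset.univ.filter
              (fun i => gr i = (ρ:ℕ) ∧ uses s t i k)).erase imax ⊆
            (pred c s t imax).filter (fun i' => gr i' = (ρ:ℕ) ∧ uses s t i' k) := by
          intro i hi
          obtain ⟨hne', hiT2⟩ := Finset.mem_erase.mp hi
          simp only [Finset.mem_filter, Finset.mem_univ, true_and] at hiT2
          have hlt : ltJ c s t i imax := by
            rcases ltJ_total c s t hne' with h | h
            · exact h
            · exact absurd (hmax i (by
                simp only [Finset.mem_filter, Finset.mem_univ, true_and]
                exact hiT2)) (not_le.mpr (rk_lt c s t h))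
          simp only [pred, Finset.mem_filter, Finset.mem_univ, true_and]
          exact ⟨hlt, hiT2⟩
        calc (∑ i ∈ Finset.univ.filter (fun i => gr i = (ρ:ℕ) ∧ uses s t i k), d i)
            = (∑ i ∈ (Finset.univ.filter
                (fun i => gr i = (ρ:ℕ) ∧ uses s t i k)).erase imax, d i) + d imax :=
              (Finset.sum_erase_add _ _ hiT).symm
          _ ≤ (∑ i' ∈ (pred c s t imax).filter
                (fun i' => gr i' = (ρ:ℕ) ∧ uses s t i' k), d i') + d imax :=
              add_le_add_left (Finset.sum_le_sum_of_subset_of_nonneg hsubset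
                fun i _ _ => (hd i).le) _
          _ ≤ c k := key
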